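/- Let f = x^11 + y^10 + x^6·y^6, regarded as an element of ℂ⟦x,y⟧. Then the Tjurina number of f at the origin equals 78, i.e., dim_ℂ ℂ⟦x,y⟧/(f, ∂f/∂x, ∂f/∂y) = 78. -/

import Mathlib

noncomputable section

/-- Formal partial derivative `∂f/∂xᵢ` of a formal power series in two variables:
the coefficient of `x^d` in `∂f/∂xᵢ` is `(dᵢ + 1)` times the coefficient of `x^(d + eᵢ)` in `f`. -/
def pder (i : Fin 2) (f : MvPowerSeries (Fin 2) ℂ) : MvPowerSeries (Fin 2) ℂ :=
  fun d => ((d i : ℂ) + 1) * MvPowerSeries.coeff (d + Finsupp.single i 1) f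

/-- The Jacobian ideal `(∂f/∂x, ∂f/∂y)` of `f ∈ ℂ⟦x,y⟧`. -/
def milnorIdeal (f : MvPowerSeries (Fin 2) ℂ) : Ideal (MvPowerSeries (Fin 2) ℂ) :=
  Ideal.span {pder 0 f, pder 1 f}

/-- The Tjurina ideal `(f, ∂f/∂x, ∂f/∂y)` of `f ∈ ℂ⟦x,y⟧`. -/
def tjurinaIdeal (f : MvPowerSeries (Fin 2) ℂ) : Ideal (MvPowerSeries (Fin 2) ℂ) :=
  Ideal.span {f, pder 0 f, pder 1 f}

/-- The Milnor number `μ(f) = dim_ℂ ℂ⟦x,y⟧/(∂f/∂x, ∂f/∂y)`. -/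
def milnor (f : MvPowerSeries (Fin 2) ℂ) : ℕ :=
  Module.finrank ℂ (MvPowerSeries (Fin 2) ℂ ⧸ milnorIdeal f)

/-- The Tjurina number `τ(f) = dim_ℂ ℂ⟦x,y⟧/(f, ∂f/∂x, ∂f/∂y)`. -/
def tjurina (f : MvPowerSeries (Fin 2) ℂ) : ℕ :=
  Module.finrank ℂ (MvPowerSeries (Fin 2) ℂ ⧸ tjurinaIdeal f)

/-- The substitution `f(x,y) ↦ f(x, x·y)` on `ℂ⟦x,y⟧`: the monomial `x^p y^q` is sent to
`x^(p+q) y^q`, so the coefficient of `x^a y^b` in the result is the coefficient of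
`x^(a-b) y^b` in `f` when `b ≤ a`, and `0` otherwise. -/
def substXY (f : MvPowerSeries (Fin 2) ℂ) : MvPowerSeries (Fin 2) ℂ :=
  fun d => if d 1 ≤ d 0 then
      MvPowerSeries.coeff (Finsupp.single 0 (d 0 - d 1) + Finsupp.single 1 (d 1)) f
    else 0

/-- The natural inclusion `ℂ⟦x⟧ → ℂ⟦x,y⟧` (series in the first variable only). -/
def ofX (a : PowerSeries ℂ) : MvPowerSeries (Fin 2) ℂ :=
  fun d => if d 1 = 0 then PowerSeries.coeff (d 0) a else 0

/-- `f ∈ ℂ⟦x,y⟧` has order (multiplicity at the origin) exactly `m`: all terms of total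
degree `< m` vanish and some term of total degree `m` is nonzero. -/
def hasMult (f : MvPowerSeries (Fin 2) ℂ) (m : ℕ) : Prop :=
  (∀ d : Fin 2 →₀ ℕ, (d.sum fun _ n => n) < m → MvPowerSeries.coeff d f = 0) ∧
    ∃ d : Fin 2 →₀ ℕ, (d.sum fun _ n => n) = m ∧ MvPowerSeries.coeff d f ≠ 0


section Aux
open MvPowerSeries
open MvPowerSeries

abbrev PS := MvPowerSeries (Fin 2) ℂ

/-- The monomial exponent `x^a y^b`. -/
def M (a b : ℕ) : Fin 2 →₀ ℕ := Finsupp.single 0 a + Finsupp.single 1 b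

lemma M_apply0 (a b : ℕ) : M a b 0 = a := by simp [M, Finsupp.single_apply]
lemma M_apply1 (a b : ℕ) : M a b 1 = b := by simp [M, Finsupp.single_apply]

lemma M_eta (d : Fin 2 →₀ ℕ) : M (d 0) (d 1) = d := by
  ext i
  fin_cases i
  · simpa using M_apply0 (d 0) (d 1)
  · simpa using M_apply1 (d 0) (d 1)

lemma M_le_iff (a b : ℕ) (d : Fin 2 →₀ ℕ) : M a b ≤ d ↔ a ≤ d 0 ∧ b ≤ d 1 := by
  rw [Finsupp.le_def]
  constructor
  · intro h; exact ⟨by simpa [M_apply0] using h 0, by simpa [M_apply1] using h 1⟩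
  · rintro ⟨h0, h1⟩ i
    fin_cases i
    · simpa [M_apply0] using h0
    · simpa [M_apply1] using h1

lemma sub_M_apply0 (a b : ℕ) (d : Fin 2 →₀ ℕ) : (d - M a b) 0 = d 0 - a := by
  simp [Finsupp.tsub_apply, M_apply0]
lemma sub_M_apply1 (a b : ℕ) (d : Fin 2 →₀ ℕ) : (d - M a b) 1 = d 1 - b := by
  simp [Finsupp.tsub_apply, M_apply1]

lemma M_inj {a b c e : ℕ} : M a b = M c e ↔ a = c ∧ b = e := by
  constructor
  · intro h
    constructor
    · have := congrArg (fun v => v 0) h; simpa [M_apply0] using this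
    · have := congrArg (fun v => v 1) h; simpa [M_apply1] using this
  · rintro ⟨rfl, rfl⟩; rfl

end Aux
section Gens
open MvPowerSeries

/-- `f = x^11 + y^10 + x^6 y^6`. -/
def ff : PS := (MvPowerSeries.X 0) ^ 11 + (MvPowerSeries.X 1) ^ 10
      + (MvPowerSeries.X 0) ^ 6 * (MvPowerSeries.X 1) ^ 6

lemma X0_pow (n : ℕ) : (MvPowerSeries.X 0 : PS) ^ n = monomial (M n 0) 1 := by
  rw [MvPowerSeries.X_pow_eq]
  congr 1
  simp [M]

lemma X1_pow (n : ℕ) : (MvPowerSeries.X 1 : PS) ^ n = monomial (M 0 n) 1 := by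
  rw [MvPowerSeries.X_pow_eq]
  congr 1
  simp [M]

lemma ff_eq : ff = monomial (M 11 0) 1 + monomial (M 0 10) 1 + monomial (M 6 6) 1 := by
  rw [ff, X0_pow, X1_pow, X0_pow, X1_pow, monomial_mul_monomial]
  norm_num
  congr 1
  simp [M, add_comm, add_left_comm]

lemma coeff_ff (d : Fin 2 →₀ ℕ) :
    MvPowerSeries.coeff d ff = (if d = M 11 0 then 1 else 0) + (if d = M 0 10 then 1 else 0)
      + (if d = M 6 6 then 1 else 0) := by
  rw [ff_eq]
  simp only [map_add, MvPowerSeries.coeff_monomial]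

end Gens
section Pders
open MvPowerSeries

lemma eqM (u : Fin 2 →₀ ℕ) (a b : ℕ) (h0 : u 0 = a) (h1 : u 1 = b) : u = M a b := by
  subst h0; subst h1; exact (M_eta u).symm

lemma eq_M_iff (d : Fin 2 →₀ ℕ) (a b : ℕ) : d = M a b ↔ d 0 = a ∧ d 1 = b := by
  constructor
  · rintro rfl; exact ⟨M_apply0 a b, M_apply1 a b⟩
  · rintro ⟨h0, h1⟩; exact eqM d a b h0 h1

lemma add_single0 (d : Fin 2 →₀ ℕ) : d + Finsupp.single 0 1 = M (d 0 + 1) (d 1) :=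
  eqM _ _ _ (by simp) (by simp [Finsupp.single_apply])

lemma add_single1 (d : Fin 2 →₀ ℕ) : d + Finsupp.single 1 1 = M (d 0) (d 1 + 1) :=
  eqM _ _ _ (by simp [Finsupp.single_apply]) (by simp)

lemma pd0 : pder 0 ff = monomial (M 10 0) 11 + monomial (M 5 6) 6 := by
  apply MvPowerSeries.ext; intro d
  have lhs : MvPowerSeries.coeff d (pder 0 ff)
      = ((d 0 : ℂ) + 1) * MvPowerSeries.coeff (d + Finsupp.single 0 1) ff := rfl
  rw [lhs, add_single0, coeff_ff, map_add, MvPowerSeries.coeff_monomial,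
    MvPowerSeries.coeff_monomial]
  simp only [M_inj]
  simp only [eq_M_iff]
  have e1 : (d 0 + 1 = 11 ∧ d 1 = 0) ↔ (d 0 = 10 ∧ d 1 = 0) := by omega
  have e2 : (d 0 + 1 = 0 ∧ d 1 = 10) ↔ False := ⟨fun h => absurd h.1 (by omega), False.elim⟩
  have e3 : (d 0 + 1 = 6 ∧ d 1 = 6) ↔ (d 0 = 5 ∧ d 1 = 6) := by omega
  rw [if_congr e1 rfl rfl, if_congr e2 rfl rfl, if_congr e3 rfl rfl, if_false]
  by_cases h1 : d 0 = 10 ∧ d 1 = 0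
  · obtain ⟨h, h'⟩ := h1; rw [h, h']; norm_num
  by_cases h2 : d 0 = 5 ∧ d 1 = 6
  · obtain ⟨h, h'⟩ := h2; rw [h, h']; norm_num
  · rw [if_neg h1, if_neg h2, if_neg h1, if_neg h2]; ring

lemma pd1 : pder 1 ff = monomial (M 0 9) 10 + monomial (M 6 5) 6 := by
  apply MvPowerSeries.ext; intro d
  have lhs : MvPowerSeries.coeff d (pder 1 ff)
      = ((d 1 : ℂ) + 1) * MvPowerSeries.coeff (d + Finsupp.single 1 1) ff := rfl
  rw [lhs, add_single1, coeff_ff, map_add, MvPowerSeries.coeff_monomial,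
    MvPowerSeries.coeff_monomial]
  simp only [M_inj]
  simp only [eq_M_iff]
  have e1 : (d 0 = 11 ∧ d 1 + 1 = 0) ↔ False := ⟨fun h => absurd h.2 (by omega), False.elim⟩
  have e2 : (d 0 = 0 ∧ d 1 + 1 = 10) ↔ (d 0 = 0 ∧ d 1 = 9) := by omega
  have e3 : (d 0 = 6 ∧ d 1 + 1 = 6) ↔ (d 0 = 6 ∧ d 1 = 5) := by omega
  rw [if_congr e1 rfl rfl, if_congr e2 rfl rfl, if_congr e3 rfl rfl, if_false]
  by_cases h1 : d 0 = 0 ∧ d 1 = 9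
  · obtain ⟨h, h'⟩ := h1; rw [h, h']; norm_num
  by_cases h2 : d 0 = 6 ∧ d 1 = 5
  · obtain ⟨h, h'⟩ := h2; rw [h, h']; norm_num
  · rw [if_neg h1, if_neg h2, if_neg h1, if_neg h2]; ring

end Pders
section SGens
open MvPowerSeries

lemma M_add (a b c e : ℕ) : M a b + M c e = M (a + c) (b + e) :=
  eqM _ _ _ (by simp [Finsupp.add_apply, M_apply0]) (by simp [Finsupp.add_apply, M_apply1])

def s1 : PS := monomial (M 10 0) 1 + monomial (M 5 6) (6/11)
def s2 : PS := monomial (M 0 9) 1 + monomial (M 6 5) (3/5)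
def s3 : PS := monomial (M 6 6) 1

lemma X0_eq : (MvPowerSeries.X 0 : PS) = monomial (M 1 0) 1 := by
  rw [← pow_one (MvPowerSeries.X 0 : PS), X0_pow]
lemma X1_eq : (MvPowerSeries.X 1 : PS) = monomial (M 0 1) 1 := by
  rw [← pow_one (MvPowerSeries.X 1 : PS), X1_pow]

lemma s1_eq : s1 = monomial 0 (1/11 : ℂ) * pder 0 ff := by
  rw [s1, pd0, mul_add, monomial_mul_monomial, monomial_mul_monomial, zero_add, zero_add]
  norm_num

lemma s2_eq : s2 = monomial 0 (1/10 : ℂ) * pder 1 ff := by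
  rw [s2, pd1, mul_add, monomial_mul_monomial, monomial_mul_monomial, zero_add, zero_add]
  norm_num

lemma s3_eq : s3 = monomial 0 (5/8 : ℂ) * (MvPowerSeries.X 0 * pder 0 ff)
    + monomial 0 (11/16 : ℂ) * (MvPowerSeries.X 1 * pder 1 ff)
    + monomial 0 (-(55/8) : ℂ) * ff := by
  rw [s3, pd0, pd1, ff_eq, X0_eq, X1_eq]
  simp only [mul_add, monomial_mul_monomial, zero_add, M_add]
  norm_num
  apply MvPowerSeries.ext; intro d
  simp only [map_add, map_neg, MvPowerSeries.coeff_monomial]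
  by_cases h1 : d = M 11 0
  · rw [h1]; norm_num [M_inj]
  by_cases h2 : d = M 0 10
  · rw [h2]; norm_num [M_inj]
  by_cases h3 : d = M 6 6
  · rw [h3]; norm_num [M_inj]
  · simp only [if_neg h1, if_neg h2, if_neg h3]; ring

lemma mem_f : ff ∈ tjurinaIdeal ff := Ideal.subset_span (by simp)
lemma mem_pd0 : pder 0 ff ∈ tjurinaIdeal ff := Ideal.subset_span (by simp)
lemma mem_pd1 : pder 1 ff ∈ tjurinaIdeal ff := Ideal.subset_span (by simp)

lemma s1_mem : s1 ∈ tjurinaIdeal ff := by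
  rw [s1_eq]; exact Ideal.mul_mem_left _ _ mem_pd0
lemma s2_mem : s2 ∈ tjurinaIdeal ff := by
  rw [s2_eq]; exact Ideal.mul_mem_left _ _ mem_pd1
lemma s3_mem : s3 ∈ tjurinaIdeal ff := by
  rw [s3_eq]
  exact Ideal.add_mem _ (Ideal.add_mem _
    (Ideal.mul_mem_left _ _ (Ideal.mul_mem_left _ _ mem_pd0))
    (Ideal.mul_mem_left _ _ (Ideal.mul_mem_left _ _ mem_pd1)))
    (Ideal.mul_mem_left _ _ mem_f)

end SGens
section Division
open MvPowerSeries

/-- Coefficient accessor. -/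
def Gc (g : PS) (a b : ℕ) : ℂ := g (M a b)

def H1z (g : PS) (c : ℕ) : ℂ := Gc g 10 c - (if c = 5 then (3/5) * Gc g 4 9 else 0)

def H2f (g : PS) (a b : ℕ) : ℂ :=
  if a ≤ 5 then Gc g a (b+9) - (if a = 5 ∧ b ≤ 2 then (6/11) * H1z g (b+3) else 0) else 0

def H1f (g : PS) (a b : ℕ) : ℂ :=
  if b ≤ 5 then Gc g (a+10) b - (if b = 5 ∧ a ≤ 1 then (3/5) * H2f g (a+4) 0 else 0) else 0

def H3f (g : PS) (a b : ℕ) : ℂ :=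
  Gc g (a+6) (b+6) - (if b ≤ 5 then (6/11) * H1f g (a+1) b else 0)
    - (if a ≤ 5 then (3/5) * H2f g a (b+1) else 0)

lemma H1f_zero (g : PS) (a b : ℕ) (h : ¬ b ≤ 5) : H1f g a b = 0 := by
  simp only [H1f]; rw [if_neg h]

lemma H2f_zero (g : PS) (a b : ℕ) (h : ¬ a ≤ 5) : H2f g a b = 0 := by
  simp only [H2f]; rw [if_neg h]

def h1 (g : PS) : PS := fun d => H1f g (d 0) (d 1)
def h2 (g : PS) : PS := fun d => H2f g (d 0) (d 1)
def h3 (g : PS) : PS := fun d => H3f g (d 0) (d 1)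

lemma coeff_mul_mono (u : PS) (p q : ℕ) (c : ℂ) (d : Fin 2 →₀ ℕ) :
    MvPowerSeries.coeff d (u * monomial (M p q) c)
      = if p ≤ d 0 ∧ q ≤ d 1 then MvPowerSeries.coeff (M (d 0 - p) (d 1 - q)) u * c
        else 0 := by
  rw [MvPowerSeries.coeff_mul_monomial]
  by_cases h : M p q ≤ d
  · rw [if_pos h, if_pos ((M_le_iff p q d).mp h),
      show d - M p q = M (d 0 - p) (d 1 - q) from
        eqM _ _ _ (sub_M_apply0 p q d) (sub_M_apply1 p q d)]
  · rw [if_neg h, if_neg (fun hc => h ((M_le_iff p q d).mpr hc))]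

lemma h1_coeff (g : PS) (a b : ℕ) : MvPowerSeries.coeff (M a b) (h1 g) = H1f g a b := by
  show h1 g (M a b) = _
  simp only [h1, M_apply0, M_apply1]

lemma h2_coeff (g : PS) (a b : ℕ) : MvPowerSeries.coeff (M a b) (h2 g) = H2f g a b := by
  show h2 g (M a b) = _
  simp only [h2, M_apply0, M_apply1]

lemma h3_coeff (g : PS) (a b : ℕ) : MvPowerSeries.coeff (M a b) (h3 g) = H3f g a b := by
  show h3 g (M a b) = _
  simp only [h3, M_apply0, M_apply1]

end Division
section Core
open MvPowerSeries

lemma core (g : PS) (a b : ℕ) (h : ¬(a ≤ 9 ∧ b ≤ 8 ∧ (a ≤ 5 ∨ b ≤ 5))) :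
    ((if 10 ≤ a ∧ 0 ≤ b then H1f g (a - 10) (b - 0) * 1 else 0)
      + (if 5 ≤ a ∧ 6 ≤ b then H1f g (a - 5) (b - 6) * (6/11) else 0))
    + (((if 0 ≤ a ∧ 9 ≤ b then H2f g (a - 0) (b - 9) * 1 else 0)
      + (if 6 ≤ a ∧ 5 ≤ b then H2f g (a - 6) (b - 5) * (3/5) else 0))
    + (if 6 ≤ a ∧ 6 ≤ b then H3f g (a - 6) (b - 6) * 1 else 0))
    = Gc g a b := by
  have hreg : (10 ≤ a ∧ b ≤ 5) ∨ (a ≤ 5 ∧ 9 ≤ b) ∨ (6 ≤ a ∧ 6 ≤ b) := by omega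
  rcases hreg with ⟨h10, hb5⟩ | ⟨ha5, hb9⟩ | ⟨ha6, hb6⟩
  · -- region 1 : a ≥ 10, b ≤ 5
    obtain ⟨a', rfl⟩ : ∃ a', a = a' + 10 := ⟨a - 10, by omega⟩
    rw [if_pos (by omega : 10 ≤ a' + 10 ∧ 0 ≤ b),
      if_neg (by omega : ¬(5 ≤ a' + 10 ∧ 6 ≤ b)),
      if_neg (by omega : ¬(0 ≤ a' + 10 ∧ 9 ≤ b)),
      if_neg (by omega : ¬(6 ≤ a' + 10 ∧ 6 ≤ b))]
    simp only [Nat.add_sub_cancel, Nat.sub_zero]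
    by_cases hb : b = 5
    · subst hb
      rw [if_pos (by omega : 6 ≤ a' + 10 ∧ 5 ≤ 5),
        show a' + 10 - 6 = a' + 4 from by omega, Nat.sub_self]
      simp only [H1f]
      rw [if_pos (by omega : (5:ℕ) ≤ 5)]
      by_cases ha' : a' ≤ 1
      · rw [if_pos (show True ∧ a' ≤ 1 from ⟨trivial, ha'⟩)]; ring
      · rw [if_neg (show ¬(True ∧ a' ≤ 1) from fun hc => ha' hc.2),
          H2f_zero g (a' + 4) 0 (by omega)]
        ring
    · rw [if_neg (by omega : ¬(6 ≤ a' + 10 ∧ 5 ≤ b))]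
      simp only [H1f]
      rw [if_pos hb5, if_neg (by omega : ¬(b = 5 ∧ a' ≤ 1))]
      ring
  · -- region 2 : a ≤ 5, b ≥ 9
    obtain ⟨b', rfl⟩ : ∃ b', b = b' + 9 := ⟨b - 9, by omega⟩
    rw [if_neg (by omega : ¬(10 ≤ a ∧ 0 ≤ b' + 9)),
      if_pos (by omega : 0 ≤ a ∧ 9 ≤ b' + 9),
      if_neg (by omega : ¬(6 ≤ a ∧ 5 ≤ b' + 9)),
      if_neg (by omega : ¬(6 ≤ a ∧ 6 ≤ b' + 9))]
    simp only [Nat.add_sub_cancel, Nat.sub_zero]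
    by_cases ha : a = 5
    · subst ha
      rw [if_pos (by omega : 5 ≤ 5 ∧ 6 ≤ b' + 9),
        show b' + 9 - 6 = b' + 3 from by omega, Nat.sub_self]
      simp only [H2f]
      rw [if_pos (by omega : (5:ℕ) ≤ 5)]
      by_cases hb' : b' ≤ 2
      · rw [if_pos (show True ∧ b' ≤ 2 from ⟨trivial, hb'⟩)]
        simp only [H1f]
        rw [if_pos (by omega : b' + 3 ≤ 5)]
        by_cases hb2 : b' = 2
        · subst hb2
          norm_num [H1z, H2f]
          try ring
        · rw [if_neg (by omega : ¬(b' + 3 = 5 ∧ (0:ℕ) ≤ 1))]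
          simp only [H1z]
          rw [if_neg (by omega : ¬(b' + 3 = 5))]
          ring
      · rw [if_neg (show ¬(True ∧ b' ≤ 2) from fun hc => hb' hc.2),
          H1f_zero g 0 (b' + 3) (by omega)]
        ring
    · rw [if_neg (by omega : ¬(5 ≤ a ∧ 6 ≤ b' + 9))]
      simp only [H2f]
      rw [if_pos ha5, if_neg (by omega : ¬(a = 5 ∧ b' ≤ 2))]
      ring
  · -- region 3 : a ≥ 6, b ≥ 6
    obtain ⟨a', rfl⟩ : ∃ a', a = a' + 6 := ⟨a - 6, by omega⟩
    obtain ⟨b', rfl⟩ : ∃ b', b = b' + 6 := ⟨b - 6, by omega⟩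
    have t1z : (if 10 ≤ a' + 6 ∧ 0 ≤ b' + 6 then
        H1f g (a' + 6 - 10) (b' + 6 - 0) * 1 else 0) = 0 := by
      split_ifs with hh
      · rw [Nat.sub_zero, H1f_zero g _ _ (by omega)]; ring
      · rfl
    have t3z : (if 0 ≤ a' + 6 ∧ 9 ≤ b' + 6 then
        H2f g (a' + 6 - 0) (b' + 6 - 9) * 1 else 0) = 0 := by
      split_ifs with hh
      · rw [Nat.sub_zero, H2f_zero g _ _ (by omega)]; ring
      · rfl
    rw [t1z, t3z,
      if_pos (by omega : 5 ≤ a' + 6 ∧ 6 ≤ b' + 6),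
      if_pos (by omega : 6 ≤ a' + 6 ∧ 5 ≤ b' + 6),
      if_pos (by omega : 6 ≤ a' + 6 ∧ 6 ≤ b' + 6),
      show a' + 6 - 5 = a' + 1 from by omega,
      show b' + 6 - 6 = b' from by omega,
      show a' + 6 - 6 = a' from by omega,
      show b' + 6 - 5 = b' + 1 from by omega]
    simp only [H3f]
    by_cases hb : b' ≤ 5 <;> by_cases ha : a' ≤ 5
    · rw [if_pos hb, if_pos ha]; ring
    · rw [if_pos hb, if_neg ha, H2f_zero g a' (b' + 1) ha]; ring
    · rw [if_neg hb, if_pos ha, H1f_zero g (a' + 1) b' hb]; ring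
    · rw [if_neg hb, if_neg ha, H1f_zero g (a' + 1) b' hb, H2f_zero g a' (b' + 1) ha]; ring

end Core
section Upper
open MvPowerSeries

def PP (g : PS) : PS := h1 g * s1 + h2 g * s2 + h3 g * s3

lemma PP_mem (g : PS) : PP g ∈ tjurinaIdeal ff :=
  Ideal.add_mem _ (Ideal.add_mem _
    (Ideal.mul_mem_left _ _ s1_mem)
    (Ideal.mul_mem_left _ _ s2_mem)) (Ideal.mul_mem_left _ _ s3_mem)

lemma coeff_eq_Gc (g : PS) (d : Fin 2 →₀ ℕ) :
    MvPowerSeries.coeff d g = Gc g (d 0) (d 1) := by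
  rw [Gc, M_eta, MvPowerSeries.coeff_apply]

lemma key (g : PS) (d : Fin 2 →₀ ℕ)
    (h : ¬(d 0 ≤ 9 ∧ d 1 ≤ 8 ∧ (d 0 ≤ 5 ∨ d 1 ≤ 5))) :
    MvPowerSeries.coeff d (PP g) = MvPowerSeries.coeff d g := by
  have e1 : MvPowerSeries.coeff d (h1 g * s1)
      = (if 10 ≤ d 0 ∧ 0 ≤ d 1 then H1f g (d 0 - 10) (d 1 - 0) * 1 else 0)
        + (if 5 ≤ d 0 ∧ 6 ≤ d 1 then H1f g (d 0 - 5) (d 1 - 6) * (6/11) else 0) := by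
    rw [s1, mul_add, map_add, coeff_mul_mono, coeff_mul_mono, h1_coeff, h1_coeff]
  have e2 : MvPowerSeries.coeff d (h2 g * s2)
      = (if 0 ≤ d 0 ∧ 9 ≤ d 1 then H2f g (d 0 - 0) (d 1 - 9) * 1 else 0)
        + (if 6 ≤ d 0 ∧ 5 ≤ d 1 then H2f g (d 0 - 6) (d 1 - 5) * (3/5) else 0) := by
    rw [s2, mul_add, map_add, coeff_mul_mono, coeff_mul_mono, h2_coeff, h2_coeff]
  have e3 : MvPowerSeries.coeff d (h3 g * s3)
      = (if 6 ≤ d 0 ∧ 6 ≤ d 1 then H3f g (d 0 - 6) (d 1 - 6) * 1 else 0) := by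
    rw [s3, coeff_mul_mono, h3_coeff]
  rw [PP, map_add, map_add, e1, e2, e3, coeff_eq_Gc]
  have hc := core g (d 0) (d 1) h
  linear_combination hc

def stdSet : Finset (ℕ × ℕ) :=
  (Finset.range 10 ×ˢ Finset.range 9).filter (fun p => p.1 ≤ 5 ∨ p.2 ≤ 5)

lemma mem_stdSet (p : ℕ × ℕ) :
    p ∈ stdSet ↔ (p.1 ≤ 9 ∧ p.2 ≤ 8 ∧ (p.1 ≤ 5 ∨ p.2 ≤ 5)) := by
  simp only [stdSet, Finset.mem_filter, Finset.mem_product, Finset.mem_range]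
  omega

lemma stdSet_card : stdSet.card = 78 := by decide

lemma rem_in_span (g : PS) :
    g - PP g ∈ Submodule.span ℂ
      ((fun p : ℕ × ℕ => (monomial (M p.1 p.2) 1 : PS)) '' ↑stdSet) := by
  have hrepr : g - PP g = ∑ p ∈ stdSet,
      (MvPowerSeries.coeff (M p.1 p.2) (g - PP g)) • monomial (M p.1 p.2) 1 := by
    apply MvPowerSeries.ext; intro d
    rw [map_sum]
    by_cases hd : (d 0 ≤ 9 ∧ d 1 ≤ 8 ∧ (d 0 ≤ 5 ∨ d 1 ≤ 5))
    · rw [Finset.sum_eq_single (d 0, d 1)]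
      · rw [map_smul, MvPowerSeries.coeff_monomial, if_pos (M_eta d).symm, smul_eq_mul,
          mul_one]
        show MvPowerSeries.coeff d (g - PP g)
            = MvPowerSeries.coeff (M (d 0) (d 1)) (g - PP g)
        rw [M_eta]
      · intro p hp hne
        rw [map_smul, MvPowerSeries.coeff_monomial, if_neg, smul_eq_mul, mul_zero]
        intro hc
        have hcc := (eq_M_iff d p.1 p.2).mp hc
        exact hne (Prod.ext hcc.1.symm hcc.2.symm)
      · intro hnot
        exact absurd ((mem_stdSet (d 0, d 1)).mpr hd) hnot
    · rw [map_sub, key g d hd, sub_self]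
      symm
      apply Finset.sum_eq_zero
      intro p hp
      rw [map_smul, MvPowerSeries.coeff_monomial, if_neg, smul_eq_mul, mul_zero]
      intro hc
      have := (eq_M_iff d p.1 p.2).mp hc
      have hmem := (mem_stdSet p).mp hp
      exact hd (by omega)
  rw [hrepr]
  exact Submodule.sum_mem _ (fun p hp => Submodule.smul_mem _ _
    (Submodule.subset_span (Set.mem_image_of_mem _ (Finset.mem_coe.mpr hp))))

end Upper
section UpperBound
open MvPowerSeries

abbrev II : Ideal PS := tjurinaIdeal ff

def mkQ : PS →ₗ[ℂ] (PS ⧸ II) := (Ideal.Quotient.mkₐ ℂ II).toLinearMap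

def monoP (p : ℕ × ℕ) : PS := monomial (M p.1 p.2) 1

instance : DecidableEq (PS ⧸ II) := Classical.decEq _

def TT : Finset (PS ⧸ II) := stdSet.image (fun p => mkQ (monoP p))

lemma span_TT : Submodule.span ℂ (↑TT : Set (PS ⧸ II)) = ⊤ := by
  rw [eq_top_iff]
  rintro q -
  obtain ⟨g, rfl⟩ := Ideal.Quotient.mk_surjective q
  have hmk : Ideal.Quotient.mk II g = mkQ (g - PP g) := by
    have h0 : Ideal.Quotient.mk II (PP g) = 0 :=
      (Ideal.Quotient.eq_zero_iff_mem).mpr (PP_mem g)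
    show _ = Ideal.Quotient.mkₐ ℂ II (g - PP g)
    rw [map_sub, Ideal.Quotient.mkₐ_eq_mk, h0, sub_zero]
  rw [hmk]
  have h3 : mkQ (g - PP g) ∈ Submodule.map mkQ
      (Submodule.span ℂ ((fun p : ℕ × ℕ => (monomial (M p.1 p.2) 1 : PS)) '' ↑stdSet)) :=
    Submodule.mem_map_of_mem (rem_in_span g)
  rw [Submodule.map_span] at h3
  refine Submodule.span_mono ?_ h3
  rw [← Set.image_comp]
  intro x hx
  obtain ⟨p, hp, rfl⟩ := hx
  have : mkQ (monoP p) ∈ TT := Finset.mem_image.mpr ⟨p, hp, rfl⟩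
  exact Finset.mem_coe.mpr this

instance QQ_finite : Module.Finite ℂ (PS ⧸ II) := ⟨⟨TT, span_TT⟩⟩

lemma upper : Module.finrank ℂ (PS ⧸ II) ≤ 78 := by
  have h1 : Module.finrank ℂ (PS ⧸ II)
      = Module.finrank ℂ (Submodule.span ℂ (↑TT : Set (PS ⧸ II))) := by
    rw [span_TT, finrank_top]
  rw [h1]
  calc Module.finrank ℂ (Submodule.span ℂ (↑TT : Set (PS ⧸ II)))
      ≤ TT.card := finrank_span_finset_le_card TT
    _ ≤ stdSet.card := Finset.card_image_le
    _ = 78 := stdSet_card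

end UpperBound
section Lower
open MvPowerSeries

/-- The scalar attached to the extra term of the dual functional at `p`. -/
def exC (p : ℕ × ℕ) : ℂ :=
  if p.1 = 5 ∧ 6 ≤ p.2 then -(6/11) else if 6 ≤ p.1 ∧ p.2 = 5 then -(3/5) else 0

/-- The location of the extra term of the dual functional at `p`. -/
def exA (p : ℕ × ℕ) : ℕ := if p.1 = 5 ∧ 6 ≤ p.2 then 10 else p.1 - 6
def exB (p : ℕ × ℕ) : ℕ := if p.1 = 5 ∧ 6 ≤ p.2 then p.2 - 6 else 9

/-- The dual functional at `p`. -/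
def phiP (p : ℕ × ℕ) : PS →ₗ[ℂ] ℂ :=
  MvPowerSeries.coeff (M p.1 p.2) + exC p • MvPowerSeries.coeff (M (exA p) (exB p))

lemma coeff_M_mul_mono (u : PS) (p q : ℕ) (cc : ℂ) (a b : ℕ) :
    MvPowerSeries.coeff (M a b) (u * monomial (M p q) cc)
      = if p ≤ a ∧ q ≤ b then MvPowerSeries.coeff (M (a - p) (b - q)) u * cc else 0 := by
  rw [coeff_mul_mono, M_apply0, M_apply1]

lemma phiP_apply (p : ℕ × ℕ) (u : PS) :
    phiP p u = MvPowerSeries.coeff (M p.1 p.2) u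
      + exC p * MvPowerSeries.coeff (M (exA p) (exB p)) u := by
  simp [phiP, LinearMap.add_apply, LinearMap.smul_apply, smul_eq_mul]


lemma phiP_mul_f (pa pb : ℕ) (hs : pa ≤ 9 ∧ pb ≤ 8 ∧ (pa ≤ 5 ∨ pb ≤ 5)) (u : PS) :
    phiP (pa, pb) (u * ff) = 0 := by
  rw [phiP_apply, ff_eq]
  simp only [mul_add, map_add, coeff_M_mul_mono, exC, exA, exB]
  by_cases c1 : pa = 5 ∧ 6 ≤ pb
  · obtain ⟨rfl, h6⟩ := c1
    obtain ⟨qb, rfl⟩ : ∃ qb, pb = qb + 6 := ⟨pb - 6, by omega⟩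
    norm_num
    split_ifs <;> first | ring1 | (exfalso; omega)
  by_cases c2 : 6 ≤ pa ∧ pb = 5
  · obtain ⟨h6, rfl⟩ := c2
    norm_num
    split_ifs <;> first | ring1 | (exfalso; omega)
  · norm_num
    split_ifs <;> first | ring1 | (exfalso; omega)

lemma phiP_mul_pd0 (pa pb : ℕ) (hs : pa ≤ 9 ∧ pb ≤ 8 ∧ (pa ≤ 5 ∨ pb ≤ 5)) (u : PS) :
    phiP (pa, pb) (u * pder 0 ff) = 0 := by
  rw [phiP_apply, pd0]
  simp only [mul_add, map_add, coeff_M_mul_mono, exC, exA, exB]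
  by_cases c1 : pa = 5 ∧ 6 ≤ pb
  · obtain ⟨rfl, h6⟩ := c1
    obtain ⟨qb, rfl⟩ : ∃ qb, pb = qb + 6 := ⟨pb - 6, by omega⟩
    norm_num
    split_ifs <;> first | ring1 | (exfalso; omega)
  by_cases c2 : 6 ≤ pa ∧ pb = 5
  · obtain ⟨h6, rfl⟩ := c2
    norm_num
    split_ifs <;> first | ring1 | (exfalso; omega)
  · norm_num
    split_ifs <;> first | ring1 | (exfalso; omega)

lemma phiP_mul_pd1 (pa pb : ℕ) (hs : pa ≤ 9 ∧ pb ≤ 8 ∧ (pa ≤ 5 ∨ pb ≤ 5)) (u : PS) :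
    phiP (pa, pb) (u * pder 1 ff) = 0 := by
  rw [phiP_apply, pd1]
  simp only [mul_add, map_add, coeff_M_mul_mono, exC, exA, exB]
  by_cases c1 : pa = 5 ∧ 6 ≤ pb
  · obtain ⟨rfl, h6⟩ := c1
    obtain ⟨qb, rfl⟩ : ∃ qb, pb = qb + 6 := ⟨pb - 6, by omega⟩
    norm_num
    split_ifs <;> first | ring1 | (exfalso; omega)
  by_cases c2 : 6 ≤ pa ∧ pb = 5
  · obtain ⟨h6, rfl⟩ := c2
    norm_num
    split_ifs <;> first | ring1 | (exfalso; omega)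
  · norm_num
    split_ifs <;> first | ring1 | (exfalso; omega)

end Lower
section LowerBound
open MvPowerSeries

lemma phiP_vanish (p : ℕ × ℕ) (hp : p ∈ stdSet) (x : PS) (hx : x ∈ tjurinaIdeal ff) :
    phiP p x = 0 := by
  obtain ⟨pa, pb⟩ := p
  have hs := (mem_stdSet (pa, pb)).mp hp
  rw [tjurinaIdeal] at hx
  rw [show ({ff, pder 0 ff, pder 1 ff} : Set PS)
    = insert ff {pder 0 ff, pder 1 ff} from rfl] at hx
  obtain ⟨a, z, hz, rfl⟩ := Ideal.mem_span_insert.mp hx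
  obtain ⟨u, v, rfl⟩ := Ideal.mem_span_pair.mp hz
  rw [map_add, map_add, phiP_mul_f pa pb hs a, phiP_mul_pd0 pa pb hs u,
    phiP_mul_pd1 pa pb hs v]
  ring

lemma phiP_mono (ia ib ja jb : ℕ) (hi : (ia, ib) ∈ stdSet) (hj : (ja, jb) ∈ stdSet) :
    phiP (ia, ib) (monoP (ja, jb)) = if ja = ia ∧ jb = ib then 1 else 0 := by
  have hjs := (mem_stdSet _).mp hj
  rw [phiP_apply]
  have hex : exC (ia, ib) * MvPowerSeries.coeff (M (exA (ia, ib)) (exB (ia, ib)))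
      (monoP (ja, jb)) = 0 := by
    by_cases c1 : ia = 5 ∧ 6 ≤ ib
    · simp only [exC, exA, exB, if_pos c1]
      rw [monoP, MvPowerSeries.coeff_monomial, if_neg]
      · ring
      · intro hc; have := (M_inj.mp hc).1; omega
    by_cases c2 : 6 ≤ ia ∧ ib = 5
    · simp only [exC, exA, exB, if_neg c1, if_pos c2]
      rw [monoP, MvPowerSeries.coeff_monomial, if_neg]
      · ring
      · intro hc; have := (M_inj.mp hc).2; omega
    · simp only [exC, if_neg c1, if_neg c2]; ring
  rw [hex, add_zero, monoP, MvPowerSeries.coeff_monomial]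
  by_cases hij : ja = ia ∧ jb = ib
  · rw [if_pos (M_inj.mpr ⟨hij.1.symm, hij.2.symm⟩), if_pos hij]
  · rw [if_neg (fun hc => hij ⟨(M_inj.mp hc).1.symm, (M_inj.mp hc).2.symm⟩), if_neg hij]

lemma lin_indep :
    LinearIndependent ℂ (fun j : {q : ℕ × ℕ // q ∈ stdSet} => mkQ (monoP j.1)) := by
  rw [Fintype.linearIndependent_iff]
  intro c hc i
  have hmem : (∑ j : {q : ℕ × ℕ // q ∈ stdSet}, c j • monoP j.1) ∈ tjurinaIdeal ff := by
    have h0 : mkQ (∑ j : {q : ℕ × ℕ // q ∈ stdSet}, c j • monoP j.1) = 0 := by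
      rw [map_sum]
      simp only [map_smul]
      exact hc
    have : Ideal.Quotient.mk (tjurinaIdeal ff)
        (∑ j : {q : ℕ × ℕ // q ∈ stdSet}, c j • monoP j.1) = 0 := h0
    exact (Ideal.Quotient.eq_zero_iff_mem).mp this
  have h0 := phiP_vanish i.1 i.2 _ hmem
  rw [map_sum] at h0
  have hterm : ∀ j : {q : ℕ × ℕ // q ∈ stdSet},
      phiP i.1 (c j • monoP j.1) = if j = i then c j else 0 := by
    intro j
    rw [map_smul, smul_eq_mul]
    obtain ⟨⟨ia, ib⟩, hi⟩ := i
    obtain ⟨⟨ja, jb⟩, hj⟩ := j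
    rw [phiP_mono ia ib ja jb hi hj]
    by_cases hij : ja = ia ∧ jb = ib
    · rw [if_pos hij, if_pos (Subtype.ext (Prod.ext hij.1 hij.2)), mul_one]
    · rw [if_neg hij, if_neg, mul_zero]
      intro hc
      have := Subtype.ext_iff.mp hc
      rw [Prod.mk.injEq] at this
      exact hij this
  rw [Finset.sum_congr rfl (fun j _ => hterm j)] at h0
  rwa [Finset.sum_ite_eq' Finset.univ i c, if_pos (Finset.mem_univ i)] at h0

lemma lower : 78 ≤ Module.finrank ℂ (PS ⧸ II) := by
  have := lin_indep.fintype_card_le_finrank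
  rwa [Fintype.card_coe, stdSet_card] at this

end LowerBound

theorem tjurina_ff : tjurina ff = 78 := by
  rw [tjurina]
  exact le_antisymm upper lower

/-- The Tjurina number of `f = x^11 + y^10 + x^6 y^6` at the origin equals 78:
`dim_ℂ ℂ⟦x,y⟧/(f, ∂f/∂x, ∂f/∂y) = 78`. -/
theorem tjurina_example_x11_y10_x6y6 :
    tjurina ((MvPowerSeries.X 0) ^ 11 + (MvPowerSeries.X 1) ^ 10
      + (MvPowerSeries.X 0) ^ 6 * (MvPowerSeries.X 1) ^ 6 : MvPowerSeries (Fin 2) ℂ)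
      = 78 := by
  exact tjurina_ff
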